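/- Let a, b ∈ ℝ with b ≠ 0, suppose q ≠ 0, and suppose a is in the domain of s (i.e., a ≠ −λᵢ for every i with wᵢᵀq ≠ 0). Then Re(s(a + bi)) < s(a). -/
import Mathlib


open Matrix Complex
open scoped Classical

noncomputable section

/-- Euclidean norm of a vector in `ℝⁿ`. -/
def euclNorm {n : ℕ} (x : Fin n → ℝ) : ℝ := Real.sqrt (x ⬝ᵥ x)

/-- The quadratic objective `f(x) = ½ xᵀPx + qᵀx`. -/
def qobj {n : ℕ} (P : Matrix (Fin n) (Fin n) ℝ) (q : Fin n → ℝ) (x : Fin n → ℝ) : ℝ :=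
  (1 / 2) * (x ⬝ᵥ P.mulVec x) + q ⬝ᵥ x

/-- The block matrix `M = [[-P, qqᵀ/r²], [I, -P]]`. -/
def trsM {n : ℕ} (P : Matrix (Fin n) (Fin n) ℝ) (q : Fin n → ℝ) (r : ℝ) :
    Matrix (Fin n ⊕ Fin n) (Fin n ⊕ Fin n) ℝ :=
  Matrix.fromBlocks (-P) ((r ^ 2)⁻¹ • Matrix.vecMulVec q q) 1 (-P)

/-- The complexification of `M`. -/
def trsMC {n : ℕ} (P : Matrix (Fin n) (Fin n) ℝ) (q : Fin n → ℝ) (r : ℝ) :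
    Matrix (Fin n ⊕ Fin n) (Fin n ⊕ Fin n) ℂ :=
  (trsM P q r).map Complex.ofReal

/-- `μ ∈ ℂ` is an eigenvalue of the complex matrix `A`. -/
def IsEig {m : Type*} [Fintype m] (A : Matrix m m ℂ) (μ : ℂ) : Prop :=
  ∃ v : m → ℂ, v ≠ 0 ∧ A.mulVec v = μ • v

/-- The secular function `s(z) = Σᵢ (wᵢᵀq)²/(λᵢ + z)² - r²` on `ℂ`. -/
def secular {n : ℕ} (lam : Fin n → ℝ) (w : Fin n → Fin n → ℝ) (q : Fin n → ℝ) (r : ℝ)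
    (z : ℂ) : ℂ :=
  (∑ i, ((w i ⬝ᵥ q : ℝ) : ℂ) ^ 2 / (((lam i : ℝ) : ℂ) + z) ^ 2) - (r : ℂ) ^ 2

/-- The secular function on `ℝ`. -/
def secularR {n : ℕ} (lam : Fin n → ℝ) (w : Fin n → Fin n → ℝ) (q : Fin n → ℝ) (r : ℝ)
    (t : ℝ) : ℝ :=
  (∑ i, (w i ⬝ᵥ q) ^ 2 / (lam i + t) ^ 2) - r ^ 2

/-- The derivative of the secular function, `s'(t) = -2 Σᵢ (wᵢᵀq)²/(λᵢ + t)³`. -/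
def secularDeriv {n : ℕ} (lam : Fin n → ℝ) (w : Fin n → Fin n → ℝ) (q : Fin n → ℝ)
    (t : ℝ) : ℝ :=
  -2 * ∑ i, (w i ⬝ᵥ q) ^ 2 / (lam i + t) ^ 3

/-- `z` is not a pole of the secular function (the poles are the `-λᵢ` with `wᵢᵀq ≠ 0`). -/
def IsNonpole {n : ℕ} (lam : Fin n → ℝ) (w : Fin n → Fin n → ℝ) (q : Fin n → ℝ) (z : ℂ) : Prop :=
  ∀ i, w i ⬝ᵥ q ≠ 0 → z ≠ -((lam i : ℝ) : ℂ)

/-- `f` has a zero of order exactly `k` at `z`. -/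
def HasZeroOfOrder (f : ℂ → ℂ) (z : ℂ) (k : ℕ) : Prop :=
  ∃ g : ℂ → ℂ, AnalyticAt ℂ g z ∧ g z ≠ 0 ∧ ∀ᶠ u in nhds z, f u = (u - z) ^ k * g u

end


lemma aux_re_eq (c d b : ℝ) :
    (((c:ℂ))^2/(((d:ℂ))+((b:ℂ))*Complex.I)^2).re = c^2*(d^2-b^2)/((d^2+b^2)^2) := by
  rw [Complex.div_re]
  simp [Complex.normSq_apply, pow_two, Complex.mul_re, Complex.mul_im]
  ring

lemma aux_le (c d b : ℝ) (hb : b ≠ 0) :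
    (((c:ℂ))^2/(((d:ℂ))+((b:ℂ))*Complex.I)^2).re ≤ c^2/d^2 := by
  rw [aux_re_eq]
  rcases eq_or_ne d 0 with hd | hd
  · subst hd
    have hb2 : (0:ℝ) < b^2 := by positivity
    simp only [ne_eq, OfNat.ofNat_ne_zero, not_false_eq_true, zero_pow, zero_add, zero_sub,
      div_zero]
    rw [div_nonpos_iff]
    right
    constructor
    · nlinarith [sq_nonneg c]
    · positivity
  · have h1 : (0:ℝ) < (d^2+b^2)^2 := by positivity
    have h2 : (0:ℝ) < d^2 := by positivity
    rw [div_le_div_iff₀ h1 h2]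
    nlinarith [sq_nonneg c, sq_nonneg b, sq_nonneg d, sq_nonneg (c*b), sq_nonneg (c*d)]

lemma aux_lt (c d b : ℝ) (hb : b ≠ 0) (hc : c ≠ 0) (hd : d ≠ 0) :
    (((c:ℂ))^2/(((d:ℂ))+((b:ℂ))*Complex.I)^2).re < c^2/d^2 := by
  rw [aux_re_eq]
  have h1 : (0:ℝ) < (d^2+b^2)^2 := by positivity
  have h2 : (0:ℝ) < d^2 := by positivity
  rw [div_lt_div_iff₀ h1 h2]
  have hb2 : (0:ℝ) < b^2 := by positivity
  have hc2 : (0:ℝ) < c^2 := by positivity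
  nlinarith [mul_pos hc2 (mul_pos h2 hb2), mul_pos hc2 (mul_pos hb2 hb2)]

/-- if `q ≠ 0`, `b ≠ 0` and `a` is in the domain of `s`, then
`Re(s(a + bi)) < s(a)`. -/
theorem stmt_4 {n : ℕ} (hn : 0 < n)
    (P : Matrix (Fin n) (Fin n) ℝ) (hP : P.IsSymm)
    (lam : Fin n → ℝ) (w : Fin n → Fin n → ℝ)
    (hmono : Monotone lam)
    (heig : ∀ i, P.mulVec (w i) = lam i • w i)
    (horth : ∀ i j, w i ⬝ᵥ w j = if i = j then (1 : ℝ) else 0)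
    (q : Fin n → ℝ) (r : ℝ) (hr : 0 < r)
    (hq : q ≠ 0)
    (a b : ℝ) (hb : b ≠ 0)
    (ha : ∀ i, w i ⬝ᵥ q ≠ 0 → a ≠ -(lam i)) :
    (secular lam w q r ((a : ℂ) + (b : ℂ) * Complex.I)).re < secularR lam w q r a := by
  -- some coefficient is nonzero
  have hex : ∃ i, w i ⬝ᵥ q ≠ 0 := by
    by_contra hno
    push_neg at hno
    apply hq
    set W : Matrix (Fin n) (Fin n) ℝ := Matrix.of w with hW
    have hWWt : W * W.transpose = 1 := by
      ext i j
      simp [Matrix.mul_apply, Matrix.one_apply, hW, Matrix.transpose_apply]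
      simpa [dotProduct] using horth i j
    have hWtW : W.transpose * W = 1 := mul_eq_one_comm.mp hWWt
    have hWq : W.mulVec q = 0 := by
      ext i
      simpa [hW, Matrix.mulVec, dotProduct] using hno i
    calc q = (W.transpose * W).mulVec q := by rw [hWtW]; simp
    _ = W.transpose.mulVec (W.mulVec q) := by rw [Matrix.mulVec_mulVec]
    _ = 0 := by rw [hWq]; simp
  obtain ⟨i₀, hi₀⟩ := hex
  unfold secular secularR
  rw [Complex.sub_re, Complex.re_sum]
  have hr2 : (((r:ℂ))^2).re = r^2 := by
    norm_cast
  rw [hr2]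
  have key : ∀ i : Fin n,
      ((((w i ⬝ᵥ q : ℝ) : ℂ)) ^ 2 / (((lam i : ℝ) : ℂ) + ((a:ℂ) + (b:ℂ) * Complex.I)) ^ 2).re
        = ((((w i ⬝ᵥ q : ℝ) : ℂ)) ^ 2 / ((((lam i + a : ℝ)) : ℂ) + ((b:ℝ):ℂ) * Complex.I) ^ 2).re := by
    intro i
    push_cast
    ring_nf
  have hsum : (∑ i, ((((w i ⬝ᵥ q : ℝ) : ℂ)) ^ 2 / (((lam i : ℝ) : ℂ) + ((a:ℂ) + (b:ℂ) * Complex.I)) ^ 2).re)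
      < ∑ i, (w i ⬝ᵥ q) ^ 2 / (lam i + a) ^ 2 := by
    apply Finset.sum_lt_sum
    · intro i _
      rw [key i]
      exact aux_le _ _ _ hb
    · refine ⟨i₀, Finset.mem_univ _, ?_⟩
      rw [key i₀]
      have hd : lam i₀ + a ≠ 0 := by
        intro h
        exact ha i₀ hi₀ (by linarith)
      exact aux_lt _ _ _ hb hi₀ hd
  linarith
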